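/- Let z_r = z_r(α,z) = E_α^{−r}(z). Then ∂_α z_r ≥ 0 for all r, and for any compact [α₋,α₊] ⊂ (0,1) there is a constant C such that for all r ≥ 1, α ∈ [α₋,α₊], z ∈ (0,1]: (∂_α z_r)/z_r ≤ C·max(1, log(r z^α))·(max(1,log r) − log z), and consequently ∂_α z_r ≤ C·r^{−1/α}·max(1,log(r z^α))·(max(1,log r) − log z). -/

import Mathlib

/-- Left branch of the LSV (Pomeau–Manneville type) map. -/
noncomputable def Ea (α x : ℝ) : ℝ := x * (1 + 2 ^ α * x ^ α)

namespace LSVaux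

open Real Filter Set

noncomputable def g (a y : ℝ) : ℝ := y + 2 ^ a * y ^ (1 + a)

lemma Ea_eq_g {a y : ℝ} (hy : 0 < y) : Ea a y = g a y := by
  unfold Ea g
  rw [Real.rpow_add hy, Real.rpow_one]
  ring

lemma two_rpow_pos (a : ℝ) : (0:ℝ) < 2 ^ a := Real.rpow_pos_of_pos two_pos a

lemma g_expand {a u v : ℝ} (ha : 0 ≤ a) (hu : 0 ≤ u) (huv : u ≤ v) :
    v - u ≤ g a v - g a u := by
  unfold g
  have h1 : u ^ (1+a) ≤ v ^ (1+a) := Real.rpow_le_rpow hu huv (by linarith)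
  have h2 := two_rpow_pos a
  nlinarith

lemma abs_sub_le_abs_g_sub {a u v : ℝ} (ha : 0 ≤ a) (hu : 0 ≤ u) (hv : 0 ≤ v) :
    |v - u| ≤ |g a v - g a u| := by
  rcases le_total u v with h | h
  · have := g_expand ha hu h
    rw [abs_of_nonneg (by linarith), abs_of_nonneg (by linarith)]
    exact this
  · have := g_expand ha hv h
    rw [abs_sub_comm, abs_sub_comm (g a v), abs_of_nonneg (by linarith),
      abs_of_nonneg (by linarith)]
    exact this

lemma hasDerivAt_g_fst {y : ℝ} (hy : 0 < y) (a : ℝ) :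
    HasDerivAt (fun t => g t y) (2 ^ a * y ^ (1+a) * (Real.log 2 + Real.log y)) a := by
  have key : ∀ t : ℝ, g t y = y + Real.exp (Real.log 2 * t + Real.log y * (1 + t)) := by
    intro t
    rw [g, Real.exp_add, ← Real.rpow_def_of_pos two_pos, ← Real.rpow_def_of_pos hy]
  have hd : HasDerivAt (fun t : ℝ => Real.log 2 * t + Real.log y * (1 + t))
      (Real.log 2 + Real.log y) a := by
    exact (((hasDerivAt_id a).const_mul (Real.log 2)).add
      (((hasDerivAt_id a).const_add (1:ℝ)).const_mul (Real.log y))).congr_deriv (by ring)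
  have := (hd.exp).const_add y
  have hval : Real.exp (Real.log 2 * a + Real.log y * (1 + a)) = 2 ^ a * y ^ (1+a) := by
    rw [Real.exp_add, ← Real.rpow_def_of_pos two_pos, ← Real.rpow_def_of_pos hy]
  rw [hval] at this
  exact this.congr_of_eventuallyEq (Filter.Eventually.of_forall key)

lemma hasDerivAt_g_snd {y : ℝ} (a : ℝ) (hy : 0 < y) :
    HasDerivAt (fun t => g a t) (1 + 2 ^ a * ((1+a) * y ^ a)) y := by
  have h1 : HasDerivAt (fun t : ℝ => t ^ (1+a)) ((1+a) * y ^ a) y := by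
    have := Real.hasDerivAt_rpow_const (p := 1+a) (Or.inl hy.ne')
    simpa [add_sub_cancel_left] using this
  exact (hasDerivAt_id y).add (h1.const_mul ((2:ℝ) ^ a))

/-- Implicit differentiation for `g a (φ a) = ψ a`. -/
lemma implicit_hasDerivAt {α Dr : ℝ} (hα : 0 < α) {φ ψ : ℝ → ℝ}
    (hpos : ∀ᶠ a in nhds α, 0 < φ a)
    (heq : ∀ᶠ a in nhds α, g a (φ a) = ψ a)
    (hψ : HasDerivAt ψ Dr α) :
    HasDerivAt φ ((Dr - 2 ^ α * (φ α) ^ (1+α) * (Real.log 2 + Real.log (φ α))) /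
      (1 + 2 ^ α * ((1+α) * (φ α) ^ α))) α := by
  set y₀ := φ α with hy₀def
  have hy : 0 < y₀ := hpos.self_of_nhds
  have heqα : g α y₀ = ψ α := heq.self_of_nhds
  have hapos : ∀ᶠ a in nhds α, 0 < a := eventually_gt_nhds hα
  -- continuity of φ at α
  have hcont : Tendsto φ (nhds α) (nhds y₀) := by
    have h1 : Tendsto (fun a => ψ a - g a y₀) (nhds α) (nhds 0) := by
      have := (hψ.continuousAt.tendsto).sub ((hasDerivAt_g_fst hy α).continuousAt.tendsto)
      simpa [heqα] using this
    have h2 : Tendsto (fun a => φ a - y₀) (nhds α) (nhds 0) := by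
      apply squeeze_zero_norm' (a := fun a => |ψ a - g a y₀|)
      · filter_upwards [hpos, heq, hapos] with a h1 h2 h3
        have := abs_sub_le_abs_g_sub (a := a) h3.le hy.le h1.le
        rw [h2] at this
        simpa [Real.norm_eq_abs, abs_sub_comm (ψ a)] using this
      · simpa using h1.abs
    simpa using h2.add_const y₀
  -- MVT chosen point
  have hMVT : ∀ a : ℝ, ∃ ξ : ℝ, 0 < a → 0 < φ a →
      (0 < ξ ∧ |ξ - y₀| ≤ |φ a - y₀| ∧
        g a (φ a) - g a y₀ = (φ a - y₀) * (1 + 2 ^ a * ((1+a) * ξ ^ a))) := by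
    intro a
    by_cases hgood : 0 < a ∧ 0 < φ a
    swap
    · exact ⟨y₀, fun h1 h2 => absurd ⟨h1, h2⟩ hgood⟩
    obtain ⟨ha, hφa⟩ := hgood
    rcases lt_trichotomy (φ a) y₀ with hlt | heq' | hgt
    · obtain ⟨c, hc, hcd⟩ := exists_hasDerivAt_eq_slope (f := g a)
        (f' := fun t => 1 + 2 ^ a * ((1+a) * t ^ a)) hlt
        (fun t ht => (hasDerivAt_g_snd a (lt_of_lt_of_le hφa ht.1)).continuousAt.continuousWithinAt)
        (fun t ht => hasDerivAt_g_snd a (lt_trans hφa ht.1))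
      refine ⟨c, fun _ _ => ⟨lt_trans hφa hc.1, ?_, ?_⟩⟩
      · rw [abs_of_nonpos (by linarith [hc.2]), abs_of_nonpos (by linarith)]
        linarith [hc.1]
      · rw [eq_div_iff (sub_ne_zero.mpr (ne_of_gt (by linarith)))] at hcd
        linear_combination hcd
    · exact ⟨y₀, fun _ _ => ⟨hy, by simp [heq'], by rw [heq']; ring⟩⟩
    · obtain ⟨c, hc, hcd⟩ := exists_hasDerivAt_eq_slope (f := g a)
        (f' := fun t => 1 + 2 ^ a * ((1+a) * t ^ a)) hgt
        (fun t ht => (hasDerivAt_g_snd a (lt_of_lt_of_le hy ht.1)).continuousAt.continuousWithinAt)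
        (fun t ht => hasDerivAt_g_snd a (lt_trans hy ht.1))
      refine ⟨c, fun _ _ => ⟨lt_trans hy hc.1, ?_, ?_⟩⟩
      · rw [abs_of_nonneg (by linarith [hc.1]), abs_of_nonneg (by linarith)]
        linarith [hc.2]
      · rw [eq_div_iff (sub_ne_zero.mpr (ne_of_gt (by linarith)))] at hcd
        linear_combination -hcd
  choose ξ hξ using hMVT
  set l := nhdsWithin α {α}ᶜ with hldef
  have hl_le : l ≤ nhds α := nhdsWithin_le_nhds
  have hgoodl : ∀ᶠ a in l, 0 < a ∧ 0 < φ a ∧ g a (φ a) = ψ a :=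
    hl_le (by filter_upwards [hapos, hpos, heq] with a h1 h2 h3; exact ⟨h1, h2, h3⟩)
  -- ξ tends to y₀ along l
  have hξtendsto : Tendsto ξ l (nhds y₀) := by
    have h2 : Tendsto (fun a => ξ a - y₀) l (nhds 0) := by
      apply squeeze_zero_norm' (a := fun a => |φ a - y₀|)
      · filter_upwards [hgoodl] with a ha
        exact (hξ a ha.1 ha.2.1).2.1
      · have : Tendsto (fun a => φ a - y₀) l (nhds 0) := by
          simpa using (hcont.mono_left hl_le).sub_const y₀
        simpa using this.abs
    simpa using h2.add_const y₀
  have hQ : Tendsto (fun a => 1 + 2 ^ a * ((1+a) * (ξ a) ^ a)) l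
      (nhds (1 + 2 ^ α * ((1+α) * y₀ ^ α))) := by
    have hid : Tendsto (fun a : ℝ => a) l (nhds α) := tendsto_id.mono_left hl_le
    have h2a : Tendsto (fun a : ℝ => (2:ℝ) ^ a) l (nhds ((2:ℝ) ^ α)) :=
      Filter.Tendsto.rpow tendsto_const_nhds hid (Or.inl two_ne_zero)
    have hξa : Tendsto (fun a => (ξ a) ^ a) l (nhds (y₀ ^ α)) :=
      Filter.Tendsto.rpow hξtendsto hid (Or.inl hy.ne')
    exact tendsto_const_nhds.add (h2a.mul (((hid.const_add 1)).mul hξa))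
  have hQpos : (0:ℝ) < 1 + 2 ^ α * ((1+α) * y₀ ^ α) := by
    have := two_rpow_pos α
    have := Real.rpow_pos_of_pos hy α
    positivity
  have hnum : Tendsto (fun a => slope ψ α a - slope (fun t => g t y₀) α a) l
      (nhds (Dr - 2 ^ α * y₀ ^ (1+α) * (Real.log 2 + Real.log y₀))) :=
    (hasDerivAt_iff_tendsto_slope.mp hψ).sub
      (hasDerivAt_iff_tendsto_slope.mp (hasDerivAt_g_fst hy α))
  rw [hasDerivAt_iff_tendsto_slope]
  have hdiv := hnum.div hQ hQpos.ne'
  apply hdiv.congr'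
  have hmem : ∀ᶠ a in l, a ≠ α := by
    rw [hldef, eventually_nhdsWithin_iff]
    filter_upwards with a ha
    simpa using ha
  filter_upwards [hgoodl, hmem] with a ⟨ha, hφa, heqa⟩ hane
  obtain ⟨hξpos, _, hfact⟩ := hξ a ha hφa
  have hQa : (0:ℝ) < 1 + 2 ^ a * ((1+a) * (ξ a) ^ a) := by
    have := two_rpow_pos a
    have := Real.rpow_pos_of_pos hξpos a
    positivity
  have key : ψ a - ψ α - ((fun t => g t y₀) a - (fun t => g t y₀) α) =
      (φ a - φ α) * (1 + 2 ^ a * ((1+a) * (ξ a) ^ a)) := by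
    simp only
    rw [← heqa, ← heqα]
    linear_combination hfact
  simp only [Pi.div_apply]
  rw [slope_def_field, slope_def_field, slope_def_field, div_sub_div_same, div_div, key,
    mul_div_mul_right _ _ hQa.ne']

end LSVaux


namespace LSVaux2
open Real

lemma bern_upper {p s : ℝ} (hp0 : 0 ≤ p) (hp1 : p ≤ 1) (hs : 0 ≤ s) :
    (1+s) ^ p ≤ 1 + p * s :=
  rpow_one_add_le_one_add_mul_self (by linarith) hp0 hp1

lemma step_bounds {α u v : ℝ} (hα0 : 0 < α) (hα1 : α < 1) (hu : 0 < u) (hu2 : u ≤ 1/2)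
    (hv : v = u + 2 ^ α * u ^ (1+α)) :
    (v ^ α)⁻¹ + α/4 ≤ (u ^ α)⁻¹ ∧ (u ^ α)⁻¹ ≤ (v ^ α)⁻¹ + 2 := by
  set s := 2 ^ α * u ^ α with hsdef
  have h2pos : (0:ℝ) < 2 ^ α := Real.rpow_pos_of_pos two_pos α
  have hUpos : (0:ℝ) < u ^ α := Real.rpow_pos_of_pos hu α
  have hspos : 0 < s := mul_pos h2pos hUpos
  have h2le : (2:ℝ) ^ α ≤ 2 := by
    calc (2:ℝ) ^ α ≤ 2 ^ (1:ℝ) := Real.rpow_le_rpow_of_exponent_le one_le_two hα1.le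
    _ = 2 := Real.rpow_one 2
  have h2ge : (1:ℝ) ≤ 2 ^ α := by
    calc (1:ℝ) = 2 ^ (0:ℝ) := (Real.rpow_zero 2).symm
    _ ≤ 2 ^ α := Real.rpow_le_rpow_of_exponent_le one_le_two hα0.le
  have hs1 : s ≤ 1 := by
    have h' : u ^ α ≤ (1/2 : ℝ) ^ α := Real.rpow_le_rpow hu.le hu2 hα0.le
    calc s ≤ 2 ^ α * (1/2:ℝ) ^ α := mul_le_mul_of_nonneg_left h' h2pos.le
    _ = ((2:ℝ) * (1/2)) ^ α := (Real.mul_rpow (by norm_num) (by norm_num)).symm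
    _ = 1 := by norm_num
  have hveq : v = u * (1 + s) := by
    rw [hv, hsdef, Real.rpow_add hu, Real.rpow_one]; ring
  have hvpos : 0 < v := by rw [hveq]; positivity
  have hVeq : v ^ α = u ^ α * (1+s) ^ α := by
    rw [hveq, Real.mul_rpow hu.le (by linarith)]
  have hXpos : (0:ℝ) < (1+s) ^ α := Real.rpow_pos_of_pos (by linarith) α
  have hVpos : (0:ℝ) < v ^ α := Real.rpow_pos_of_pos hvpos α
  have hBu : (1+s) ^ α ≤ 1 + α * s := bern_upper hα0.le hα1.le hspos.le
  have hBl : 1 + α * s / 2 ≤ (1+s) ^ α := by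
    have hb2 : (1+s) ^ (1-α) ≤ 1 + (1-α) * s :=
      bern_upper (by linarith) (by linarith) hspos.le
    have hprod : (1+s) ^ α * (1+s) ^ (1-α) = 1 + s := by
      rw [← Real.rpow_add (by linarith)]
      norm_num
    have hk : 1 + s ≤ (1+s) ^ α * (1 + (1-α)*s) := by
      calc 1 + s = (1+s) ^ α * (1+s) ^ (1-α) := hprod.symm
      _ ≤ (1+s) ^ α * (1 + (1-α)*s) := mul_le_mul_of_nonneg_left hb2 hXpos.le
    have hd : (0:ℝ) < 1 + (1-α)*s := by
      linarith [mul_nonneg (by linarith : (0:ℝ) ≤ 1-α) hspos.le]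
    rw [← div_le_iff₀ hd] at hk
    refine le_trans ?_ hk
    rw [le_div_iff₀ hd]
    have hint : 0 ≤ α * s * (1 - (1-α)*s) := by
      apply mul_nonneg (mul_nonneg hα0.le hspos.le)
      have := mul_le_mul_of_nonneg_right (by linarith : (1-α) ≤ 1) hspos.le
      linarith
    linarith [hint]
  have hVlow : u ^ α * (1 + α * s / 2) ≤ v ^ α := by
    rw [hVeq]
    exact mul_le_mul_of_nonneg_left hBl hUpos.le
  have hX2 : (1+s) ^ α ≤ 2 := by
    have : α * s ≤ 1 := mul_le_one₀ hα1.le hspos.le hs1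
    linarith [hBu]
  have hVhigh : v ^ α ≤ 2 * u ^ α := by
    rw [hVeq]
    calc u ^ α * (1+s) ^ α ≤ u ^ α * 2 := mul_le_mul_of_nonneg_left hX2 hUpos.le
    _ = 2 * u ^ α := by ring
  have hsU : u ^ α ≤ s := by
    calc u ^ α = 1 * u ^ α := (one_mul _).symm
    _ ≤ 2 ^ α * u ^ α := mul_le_mul_of_nonneg_right h2ge hUpos.le
  have hVU : u ^ α ≤ v ^ α := by
    have h1 : u ^ α ≤ u ^ α * (1 + α * s / 2) :=
      le_mul_of_one_le_right hUpos.le (by linarith [mul_nonneg hα0.le hspos.le])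
    exact le_trans h1 hVlow
  constructor
  · rw [← sub_nonneg]
    have key : (u ^ α)⁻¹ - ((v ^ α)⁻¹ + α/4) =
        (v ^ α - u ^ α - α/4 * (u ^ α * v ^ α)) / (u ^ α * v ^ α) := by
      field_simp
      ring
    rw [key]
    apply div_nonneg _ (by positivity)
    have t2 : 0 ≤ α/4 * u ^ α * (2 * u ^ α - v ^ α) :=
      mul_nonneg (by positivity) (by linarith)
    have t3 : 0 ≤ α/2 * u ^ α * (s - u ^ α) :=
      mul_nonneg (by positivity) (by linarith)
    linarith [hVlow, t2, t3]
  · rw [← sub_nonneg]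
    have key : (v ^ α)⁻¹ + 2 - (u ^ α)⁻¹ =
        (2 * (u ^ α * v ^ α) - (v ^ α - u ^ α)) / (u ^ α * v ^ α) := by
      field_simp
      ring
    rw [key]
    apply div_nonneg _ (by positivity)
    have hVup : v ^ α - u ^ α ≤ α * s * u ^ α := by
      have h := mul_le_mul_of_nonneg_left hBu hUpos.le
      rw [← hVeq] at h
      have e : u ^ α * (1 + α * s) = u ^ α + α * s * u ^ α := by ring
      rw [e] at h
      linarith
    have hsle : s ≤ 2 * u ^ α := by
      rw [hsdef]
      exact mul_le_mul_of_nonneg_right h2le hUpos.le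
    have t2 : α * s ≤ 2 * u ^ α := by
      have : α * s ≤ 1 * s := mul_le_mul_of_nonneg_right hα1.le hspos.le
      linarith
    have t3 : α * s * u ^ α ≤ 2 * u ^ α * u ^ α := mul_le_mul_of_nonneg_right t2 hUpos.le
    have t4 : 2 * u ^ α * u ^ α ≤ 2 * u ^ α * v ^ α :=
      mul_le_mul_of_nonneg_left hVU (by positivity)
    linarith [hVup, t3, t4]

end LSVaux2


namespace LSVaux3
open Real Finset

lemma log_diff_ge {x : ℝ} (hx : 0 < x) : 1/(x+1) ≤ Real.log (x+1) - Real.log x := by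
  have h := Real.log_le_sub_one_of_pos (show (0:ℝ) < x/(x+1) by positivity)
  rw [Real.log_div hx.ne' (by positivity)] at h
  have he : x/(x+1) - 1 = -(1/(x+1)) := by field_simp; ring
  rw [he] at h
  linarith

lemma le_two_mul_of_one_le {a b : ℝ} (ha : 1 ≤ a) (hb : 1 ≤ b) : a + b ≤ 2*(a*b) := by
  have h1 : 0 ≤ (a-1)*(b-1) := mul_nonneg (by linarith) (by linarith)
  have h2 : (1:ℝ)*1 ≤ a*b := mul_le_mul ha hb zero_le_one (by linarith)
  nlinarith

lemma log_one_add_le {t : ℝ} (ht : 0 < t) : Real.log (1 + t) ≤ 2 * max 1 (Real.log t) := by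
  have hmax1 : (1:ℝ) ≤ max 1 (Real.log t) := le_max_left _ _
  have hlog2 : Real.log 2 ≤ 1 := by linarith [Real.log_le_sub_one_of_pos (show (0:ℝ) < 2 by norm_num)]
  rcases le_total t 1 with h | h
  · have : Real.log (1+t) ≤ Real.log 2 := Real.log_le_log (by linarith) (by linarith)
    linarith
  · have h1 : (1:ℝ) + t ≤ 2*t := by linarith
    have h2 : Real.log (1+t) ≤ Real.log (2*t) := Real.log_le_log (by linarith) h1
    rw [Real.log_mul (by norm_num) (by linarith)] at h2
    have h3 : Real.log t ≤ max 1 (Real.log t) := le_max_right _ _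
    linarith

end LSVaux3

namespace LSVaux3b
open Real Finset

set_option maxHeartbeats 1600000 in
lemma seq_bounds {αm α z : ℝ} {ζ D : ℕ → ℝ}
    (hαm : 0 < αm) (hαmα : αm ≤ α) (hα1 : α < 1)
    (hz0 : 0 < z) (hz1 : z ≤ 1)
    (hζ0 : ζ 0 = z) (hζpos : ∀ k, 0 < ζ k)
    (hζeq : ∀ k, ζ k = ζ (k+1) + 2 ^ α * (ζ (k+1)) ^ (1+α))
    (hζhalf : ∀ k, ζ (k+1) ≤ 1/2)
    (hD0 : D 0 = 0)
    (hDrec : ∀ k, D (k+1) = (D k - 2 ^ α * (ζ (k+1)) ^ (1+α) *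
        (Real.log 2 + Real.log (ζ (k+1)))) /
      (1 + 2 ^ α * ((1+α) * (ζ (k+1)) ^ α))) :
    (∀ k, 0 ≤ D k) ∧
    ∀ r : ℕ, 1 ≤ r →
      D r / ζ r ≤ (32/αm) * (4/αm+1) * max 1 (Real.log (r * z ^ α)) *
          (max 1 (Real.log r) - Real.log z) ∧
      ζ r ≤ (4/αm) ^ (αm⁻¹) * (r:ℝ) ^ (-1/α) := by
  have hα0 : 0 < α := lt_of_lt_of_le hαm hαmα
  have h2pos : (0:ℝ) < 2 ^ α := Real.rpow_pos_of_pos two_pos α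
  have h2le : (2:ℝ) ^ α ≤ 2 := by
    calc (2:ℝ) ^ α ≤ 2 ^ (1:ℝ) := Real.rpow_le_rpow_of_exponent_le one_le_two hα1.le
    _ = 2 := Real.rpow_one 2
  have hApos : ∀ k, (0:ℝ) < (ζ k) ^ α := fun k => Real.rpow_pos_of_pos (hζpos k) α
  have hzApos : (0:ℝ) < z ^ α := Real.rpow_pos_of_pos hz0 α
  have hzA1 : z ^ α ≤ 1 := Real.rpow_le_one hz0.le hz1 hα0.le
  have hmono : ∀ k, ζ (k+1) ≤ ζ k := by
    intro k
    have hp : (0:ℝ) < 2 ^ α * (ζ (k+1)) ^ (1+α) :=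
      mul_pos h2pos (Real.rpow_pos_of_pos (hζpos (k+1)) _)
    linarith [hζeq k]
  have hanti : Antitone ζ := antitone_nat_of_succ_le hmono
  have hstep : ∀ k, ((ζ k) ^ α)⁻¹ + α/4 ≤ ((ζ (k+1)) ^ α)⁻¹ ∧
      ((ζ (k+1)) ^ α)⁻¹ ≤ ((ζ k) ^ α)⁻¹ + 2 := fun k =>
    LSVaux2.step_bounds hα0 hα1 (hζpos (k+1)) (hζhalf k) (hζeq k)
  have hlow : ∀ k : ℕ, (z ^ α)⁻¹ + k*(α/4) ≤ ((ζ k) ^ α)⁻¹ := by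
    intro k
    induction k with
    | zero => simp [hζ0]
    | succ k ih =>
      have := (hstep k).1
      push_cast
      push_cast at ih
      linarith
  have hup : ∀ k : ℕ, ((ζ k) ^ α)⁻¹ ≤ (z ^ α)⁻¹ + 2*k := by
    intro k
    induction k with
    | zero => simp [hζ0]
    | succ k ih =>
      have := (hstep k).2
      push_cast
      push_cast at ih
      linarith
  have hAk : ∀ k : ℕ, 1 ≤ k → (ζ k) ^ α ≤ 4/(α*k) := by
    intro k hk
    have hkpos : (0:ℝ) < (k:ℝ)*(α/4) := by
      have : (1:ℝ) ≤ (k:ℝ) := by exact_mod_cast hk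
      nlinarith
    have h1 : (k:ℝ)*(α/4) ≤ ((ζ k) ^ α)⁻¹ := by
      have := hlow k
      have : (0:ℝ) < (z ^ α)⁻¹ := by positivity
      linarith [hlow k]
    have h2 := inv_anti₀ hkpos h1
    rw [inv_inv] at h2
    calc (ζ k) ^ α ≤ ((k:ℝ)*(α/4))⁻¹ := h2
    _ = 4/(α*k) := by field_simp
  have hAz : ∀ k, (ζ k) ^ α ≤ z ^ α := by
    intro k
    apply Real.rpow_le_rpow (hζpos k).le _ hα0.le
    rw [← hζ0]
    exact hanti (Nat.zero_le k)
  -- sum of A over range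
  have hsum : ∀ r : ℕ, 1 ≤ r →
      ∑ k ∈ Finset.range r, (ζ (k+1)) ^ α ≤ (16/α) * max 1 (Real.log (r * z ^ α)) := by
    intro r hr
    set c : ℝ := 4/(α * z ^ α) with hc
    have hcpos : 0 < c := by positivity
    have hzAc : z ^ α = 4/(α*c) := by rw [hc]; field_simp
    have hterm : ∀ k : ℕ, (ζ (k+1)) ^ α ≤
        (8/α) * (Real.log (((k+1:ℕ):ℝ) + c) - Real.log ((k:ℝ) + c)) := by
      intro k
      have hx : (0:ℝ) < (k:ℝ) + c := by positivity
      have hlog : 1/(((k:ℝ)+c)+1) ≤ Real.log (((k:ℝ)+c)+1) - Real.log ((k:ℝ)+c) :=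
        LSVaux3.log_diff_ge hx
      have hcast : ((k+1:ℕ):ℝ) + c = ((k:ℝ)+c)+1 := by push_cast; ring
      rw [hcast]
      have h8 : (0:ℝ) ≤ 8/α := by positivity
      rcases le_total c ((k:ℝ)+1) with hcase | hcase
      · have hA := hAk (k+1) (by omega)
        have hmid : 4/(α*((k+1:ℕ):ℝ)) ≤ (8/α) * (1/(((k:ℝ)+c)+1)) := by
          have hcast2 : ((k+1:ℕ):ℝ) = (k:ℝ)+1 := by push_cast; ring
          rw [hcast2, div_mul_div_comm, mul_one]
          rw [div_le_div_iff₀ (by positivity) (by positivity)]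
          have := mul_le_mul_of_nonneg_left hcase (by positivity : (0:ℝ) ≤ 4*α)
          nlinarith
        calc (ζ (k+1)) ^ α ≤ 4/(α*((k+1:ℕ):ℝ)) := hA
        _ ≤ (8/α) * (1/(((k:ℝ)+c)+1)) := hmid
        _ ≤ (8/α) * (Real.log (((k:ℝ)+c)+1) - Real.log ((k:ℝ)+c)) :=
            mul_le_mul_of_nonneg_left hlog h8
      · have hmid : z ^ α ≤ (8/α) * (1/(((k:ℝ)+c)+1)) := by
          rw [hzAc, div_mul_div_comm, mul_one]
          rw [div_le_div_iff₀ (by positivity) (by positivity)]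
          have hk0 : (0:ℝ) ≤ (k:ℝ) := Nat.cast_nonneg k
          have := mul_le_mul_of_nonneg_left hcase (by positivity : (0:ℝ) ≤ 4*α)
          nlinarith
        calc (ζ (k+1)) ^ α ≤ z ^ α := hAz (k+1)
        _ ≤ (8/α) * (1/(((k:ℝ)+c)+1)) := hmid
        _ ≤ (8/α) * (Real.log (((k:ℝ)+c)+1) - Real.log ((k:ℝ)+c)) :=
            mul_le_mul_of_nonneg_left hlog h8
    calc ∑ k ∈ Finset.range r, (ζ (k+1)) ^ α
        ≤ ∑ k ∈ Finset.range r,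
          (8/α) * (Real.log (((k+1:ℕ):ℝ) + c) - Real.log ((k:ℝ) + c)) :=
          Finset.sum_le_sum (fun k _ => hterm k)
    _ = (8/α) * ∑ k ∈ Finset.range r,
          ((fun j : ℕ => Real.log ((j:ℝ) + c)) (k+1) - (fun j : ℕ => Real.log ((j:ℝ) + c)) k) := by
          rw [Finset.mul_sum]
    _ = (8/α) * (Real.log ((r:ℝ) + c) - Real.log ((0:ℕ) + c)) := by
          rw [Finset.sum_range_sub (fun j : ℕ => Real.log ((j:ℝ) + c))]
    _ ≤ (16/α) * max 1 (Real.log (r * z ^ α)) := by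
          have h0 : Real.log (((0:ℕ):ℝ) + c) = Real.log c := by norm_num
          have hrc : Real.log ((r:ℝ) + c) - Real.log c ≤ 2 * max 1 (Real.log (r * z ^ α)) := by
            rw [← Real.log_div (by positivity) hcpos.ne']
            have hrpos : (0:ℝ) < (r:ℝ) := by exact_mod_cast hr
            have hdiv : ((r:ℝ) + c)/c = 1 + (r:ℝ)/c := by rw [add_div, div_self hcpos.ne', add_comm]
            have hrc2 : (r:ℝ)/c = (r:ℝ) * (α * z ^ α)/4 := by rw [hc, div_div_eq_mul_div]
            have hle : ((r:ℝ)+c)/c ≤ 1 + (r:ℝ) * z ^ α := by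
              rw [hdiv, hrc2]
              have : (r:ℝ) * (α * z ^ α) ≤ (r:ℝ) * (1 * z ^ α) := by
                apply mul_le_mul_of_nonneg_left _ hrpos.le
                exact mul_le_mul_of_nonneg_right hα1.le hzApos.le
              nlinarith
            calc Real.log (((r:ℝ)+c)/c) ≤ Real.log (1 + (r:ℝ) * z ^ α) :=
                  Real.log_le_log (by positivity) hle
            _ ≤ 2 * max 1 (Real.log ((r:ℝ) * z ^ α)) := LSVaux3.log_one_add_le (by positivity)
          have hmax0 : (0:ℝ) ≤ max 1 (Real.log (r * z ^ α)) :=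
            le_trans zero_le_one (le_max_left _ _)
          push_cast at hrc ⊢
          have h8a : (0:ℝ) ≤ 8/α := by positivity
          calc (8/α) * (Real.log ((r:ℝ) + c) - Real.log (0 + c))
              = (8/α) * (Real.log ((r:ℝ) + c) - Real.log c) := by norm_num
          _ ≤ (8/α) * (2 * max 1 (Real.log ((r:ℝ) * z ^ α))) :=
              mul_le_mul_of_nonneg_left hrc h8a
          _ = (16/α) * max 1 (Real.log ((r:ℝ) * z ^ α)) := by ring

  -- D machinery
  have hQpos : ∀ k, (0:ℝ) < 1 + 2 ^ α * ((1+α) * (ζ (k+1)) ^ α) := by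
    intro k
    have h := mul_pos h2pos (mul_pos (by linarith : (0:ℝ) < 1+α) (hApos (k+1)))
    linarith
  have hΛ : ∀ k, 0 ≤ -(Real.log 2 + Real.log (ζ (k+1))) := by
    intro k
    have h1 : Real.log (ζ (k+1)) ≤ Real.log (1/2) := Real.log_le_log (hζpos (k+1)) (hζhalf k)
    rw [one_div, Real.log_inv] at h1
    linarith
  have hN : ∀ k, 0 ≤ 2 ^ α * (ζ (k+1)) ^ (1+α) * (-(Real.log 2 + Real.log (ζ (k+1)))) :=
    fun k => mul_nonneg (mul_nonneg h2pos.le (Real.rpow_pos_of_pos (hζpos (k+1)) _).le) (hΛ k)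
  have hDpos : ∀ k, 0 ≤ D k := by
    intro k
    induction k with
    | zero => rw [hD0]
    | succ k ih =>
      rw [hDrec k]
      apply div_nonneg _ (hQpos k).le
      have h := hN k
      nlinarith [hN k, ih]
  have hupow : ∀ k, (ζ (k+1)) ^ (1+α) = ζ (k+1) * (ζ (k+1)) ^ α := by
    intro k; rw [Real.rpow_add (hζpos (k+1)), Real.rpow_one]
  have hratio : ∀ k, D (k+1) / ζ (k+1) ≤ D k / ζ k +
      2 ^ α * (ζ (k+1)) ^ α * (-(Real.log 2 + Real.log (ζ (k+1)))) := by
    intro k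
    have hXnn := hN k
    set u := ζ (k+1) with hu
    set L := Real.log 2 + Real.log (ζ (k+1)) with hL
    set X := 2 ^ α * (ζ (k+1)) ^ (1+α) * (-L) with hX
    have hQu : ζ k ≤ u * (1 + 2 ^ α * ((1+α) * u ^ α)) := by
      rw [hζeq k, hupow k]
      have hnn : 0 ≤ α * (2 ^ α * (u * u ^ α)) :=
        mul_nonneg hα0.le (mul_nonneg h2pos.le
          (mul_nonneg (hζpos (k+1)).le (hApos (k+1)).le))
      nlinarith [hnn]
    have hD1 : D (k+1) = (D k + X) / (1 + 2 ^ α * ((1+α) * u ^ α)) := by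
      rw [hDrec k]; congr 1; rw [hX]; ring
    rw [hD1, div_div]
    have hDXnn : 0 ≤ D k + X := by linarith [hDpos k]
    have h1 : (D k + X) / (u * (1 + 2 ^ α * ((1+α) * u ^ α))) ≤ (D k + X) / ζ k := by
      apply div_le_div_of_nonneg_left hDXnn (hζpos k) hQu
    have h2 : (D k + X) / ζ k = D k / ζ k + X / ζ k := add_div _ _ _
    have h3 : X / ζ k ≤ X / u := div_le_div_of_nonneg_left hXnn (hζpos (k+1)) (hmono k)
    have h4 : X / u = 2 ^ α * u ^ α * (-L) := by
      rw [hX, hupow k, ← hu]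
      have hu0 : u ≠ 0 := (hζpos (k+1)).ne'
      rw [div_eq_iff hu0]
      ring
    rw [mul_comm u (1 + 2 ^ α * ((1+α) * u ^ α))] at h1
    rw [mul_comm u (1 + 2 ^ α * ((1+α) * u ^ α))] at hQu
    calc (D k + X) / ((1 + 2 ^ α * ((1+α) * u ^ α)) * u) ≤ (D k + X) / ζ k := h1
    _ = D k / ζ k + X / ζ k := h2
    _ ≤ D k / ζ k + X / u := by linarith
    _ = D k / ζ k + 2 ^ α * u ^ α * (-L) := by rw [h4]
  have hDsum : ∀ r : ℕ, D r / ζ r ≤ ∑ k ∈ Finset.range r,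
      2 ^ α * (ζ (k+1)) ^ α * (-(Real.log 2 + Real.log (ζ (k+1)))) := by
    intro r
    induction r with
    | zero => simp [hD0]
    | succ r ih =>
      rw [Finset.sum_range_succ]
      linarith [hratio r, ih]
  refine ⟨hDpos, fun r hr => ?_⟩
  have hrpos : (0:ℝ) < (r:ℝ) := by exact_mod_cast hr
  have hr1 : (1:ℝ) ≤ (r:ℝ) := by exact_mod_cast hr
  have hζr : ζ r ≤ 1/2 := by
    obtain ⟨m, hm⟩ : ∃ m, r = m + 1 := ⟨r - 1, by omega⟩
    rw [hm]; exact hζhalf m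
  have hmaxnn : (0:ℝ) ≤ max 1 (Real.log ((r:ℝ) * z ^ α)) :=
    le_trans zero_le_one (le_max_left _ _)
  set Λs := -(Real.log 2 + Real.log (ζ r)) with hΛs
  have hΛsnn : 0 ≤ Λs := by
    have h1 : Real.log (ζ r) ≤ Real.log (1/2) := Real.log_le_log (hζpos r) hζr
    rw [one_div, Real.log_inv] at h1
    rw [hΛs]; linarith
  have hsum2 : D r / ζ r ≤ 2 ^ α * (∑ k ∈ Finset.range r, (ζ (k+1)) ^ α) * Λs := by
    calc D r / ζ r ≤ ∑ k ∈ Finset.range r,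
          2 ^ α * (ζ (k+1)) ^ α * (-(Real.log 2 + Real.log (ζ (k+1)))) := hDsum r
    _ ≤ ∑ k ∈ Finset.range r, 2 ^ α * (ζ (k+1)) ^ α * Λs := by
        apply Finset.sum_le_sum
        intro k hk
        apply mul_le_mul_of_nonneg_left _ (mul_nonneg h2pos.le (hApos (k+1)).le)
        have hk' : k + 1 ≤ r := Finset.mem_range.mp hk
        have hζk : ζ r ≤ ζ (k+1) := hanti hk'
        have := Real.log_le_log (hζpos r) hζk
        rw [hΛs]; linarith
    _ = 2 ^ α * (∑ k ∈ Finset.range r, (ζ (k+1)) ^ α) * Λs := by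
        rw [← Finset.sum_mul, ← Finset.mul_sum]
  have hS0 : 0 ≤ ∑ k ∈ Finset.range r, (ζ (k+1)) ^ α :=
    Finset.sum_nonneg fun k _ => (hApos (k+1)).le
  have hsum3 : D r / ζ r ≤ 2 * ((16/α) * max 1 (Real.log ((r:ℝ) * z ^ α))) * Λs := by
    refine le_trans hsum2 (mul_le_mul_of_nonneg_right ?_ hΛsnn)
    exact mul_le_mul h2le (hsum r hr) hS0 (by norm_num)
  set M := max 1 (Real.log (r:ℝ)) - Real.log z with hM
  have hlogz : Real.log z ≤ 0 := Real.log_nonpos hz0.le hz1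
  have hmaxr1 : (1:ℝ) ≤ max 1 (Real.log (r:ℝ)) := le_max_left _ _
  have hM1 : 1 ≤ M := by rw [hM]; linarith
  have hΛsM : Λs ≤ (4/α + 1) * M := by
    have hinv1 : (1:ℝ) ≤ (z ^ α)⁻¹ := by
      rw [le_inv_comm₀ zero_lt_one hzApos]
      simpa using hzA1
    have hprod : (z ^ α)⁻¹ + 2*(r:ℝ) ≤ 2*((z ^ α)⁻¹ * (1+2*(r:ℝ))) := by
      have h2' : (1:ℝ) ≤ 1 + 2*(r:ℝ) := by linarith
      have := LSVaux3.le_two_mul_of_one_le hinv1 h2'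
      linarith
    have hlr : Real.log (((ζ r) ^ α)⁻¹) ≤ Real.log ((z ^ α)⁻¹ + 2*(r:ℝ)) := by
      apply Real.log_le_log (inv_pos.mpr (hApos r)) (hup r)
    have hlog2' : Real.log ((z ^ α)⁻¹ + 2*(r:ℝ)) ≤
        Real.log 2 + (Real.log ((z ^ α)⁻¹) + Real.log (1+2*(r:ℝ))) := by
      calc Real.log ((z ^ α)⁻¹ + 2*(r:ℝ)) ≤ Real.log (2*((z ^ α)⁻¹ * (1+2*(r:ℝ)))) :=
            Real.log_le_log (by linarith [inv_pos.mpr hzApos, hrpos]) hprod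
      _ = Real.log 2 + (Real.log ((z ^ α)⁻¹) + Real.log (1+2*(r:ℝ))) := by
          rw [Real.log_mul two_ne_zero (by positivity),
            Real.log_mul (by positivity) (by positivity)]
    have hzinv : Real.log ((z ^ α)⁻¹) = -(α * Real.log z) := by
      rw [Real.log_inv, Real.log_rpow hz0]
    have h12r : Real.log (1+2*(r:ℝ)) ≤ Real.log 3 + Real.log (r:ℝ) := by
      have h3r : (1:ℝ)+2*(r:ℝ) ≤ 3*(r:ℝ) := by linarith
      calc Real.log (1+2*(r:ℝ)) ≤ Real.log (3*(r:ℝ)) :=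
            Real.log_le_log (by linarith) h3r
      _ = Real.log 3 + Real.log (r:ℝ) := Real.log_mul (by norm_num) (by linarith)
    have hlog2le : Real.log 2 ≤ 1 := by
      linarith [Real.log_le_sub_one_of_pos (show (0:ℝ) < 2 by norm_num)]
    have hlog3le : Real.log 3 ≤ 2 := by
      linarith [Real.log_le_sub_one_of_pos (show (0:ℝ) < 3 by norm_num)]
    have hkey : Real.log (((ζ r) ^ α)⁻¹) ≤ 3 - α * Real.log z + Real.log (r:ℝ) := by
      rw [hzinv] at hlog2'
      linarith
    have hlogζ : Real.log (((ζ r) ^ α)⁻¹) = -(α * Real.log (ζ r)) := by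
      rw [Real.log_inv, Real.log_rpow (hζpos r)]
    have hst : -Real.log (ζ r) ≤ (3 - α * Real.log z + Real.log (r:ℝ))/α := by
      rw [le_div_iff₀ hα0]
      rw [hlogζ] at hkey
      linarith [hkey]
    have hsplit : (3 - α * Real.log z + Real.log (r:ℝ))/α =
        3/α - Real.log z + Real.log (r:ℝ)/α := by
      field_simp
    have hlog2nn : 0 ≤ Real.log 2 := Real.log_nonneg one_le_two
    have p1 : 3/α ≤ (3/α)*M := le_mul_of_one_le_right (by positivity) hM1
    have p2 : -Real.log z ≤ M := by rw [hM]; linarith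
    have p3 : Real.log (r:ℝ)/α ≤ (1/α)*M := by
      have hmr : Real.log (r:ℝ) ≤ M := by
        rw [hM]; linarith [le_max_right (1:ℝ) (Real.log (r:ℝ))]
      calc Real.log (r:ℝ)/α ≤ M/α := by gcongr
      _ = (1/α)*M := by ring
    have hMnn : 0 ≤ M := by linarith
    have hexp : (4/α+1)*M = (3/α)*M + M + (1/α)*M := by ring
    rw [hΛs, hexp]
    linarith [hst, hsplit.le, hsplit.ge, p1, p2, p3]
  constructor
  · calc D r / ζ r ≤ 2 * ((16/α) * max 1 (Real.log ((r:ℝ) * z ^ α))) * Λs := hsum3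
    _ ≤ 2 * ((16/α) * max 1 (Real.log ((r:ℝ) * z ^ α))) * ((4/α+1)*M) := by
        apply mul_le_mul_of_nonneg_left hΛsM
        exact mul_nonneg (by norm_num) (mul_nonneg (by positivity) hmaxnn)
    _ = (32/α)*(4/α+1) * max 1 (Real.log ((r:ℝ) * z ^ α)) * M := by ring
    _ ≤ (32/αm)*(4/αm+1) * max 1 (Real.log ((r:ℝ) * z ^ α)) * M := by
        have d1 : 32/α ≤ 32/αm := div_le_div_of_nonneg_left (by norm_num) hαm hαmα
        have d2 : 4/α ≤ 4/αm := div_le_div_of_nonneg_left (by norm_num) hαm hαmα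
        have e1 : (32/α)*(4/α+1) ≤ (32/αm)*(4/αm+1) :=
          mul_le_mul d1 (by linarith) (by positivity) (by positivity)
        have hMnn : (0:ℝ) ≤ M := by linarith
        exact mul_le_mul_of_nonneg_right (mul_le_mul_of_nonneg_right e1 hmaxnn) hMnn
  · have hA := hAk r hr
    have e2 : ((r:ℝ)⁻¹) ^ (α⁻¹) = (r:ℝ) ^ (-1/α) := by
      rw [Real.inv_rpow hrpos.le, ← Real.rpow_neg hrpos.le, neg_div, one_div]
    calc ζ r = ((ζ r) ^ α) ^ (α⁻¹) := (Real.rpow_rpow_inv (hζpos r).le hα0.ne').symm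
    _ ≤ (4/(α*(r:ℝ))) ^ (α⁻¹) := Real.rpow_le_rpow (hApos r).le hA (by positivity)
    _ = ((4/α) * (r:ℝ)⁻¹) ^ (α⁻¹) := by rw [← div_div, div_eq_mul_inv]
    _ = (4/α) ^ (α⁻¹) * ((r:ℝ)⁻¹) ^ (α⁻¹) := Real.mul_rpow (by positivity) (by positivity)
    _ = (4/α) ^ (α⁻¹) * (r:ℝ) ^ (-1/α) := by rw [e2]
    _ ≤ (4/αm) ^ (αm⁻¹) * (r:ℝ) ^ (-1/α) := by
        apply mul_le_mul_of_nonneg_right _ (Real.rpow_nonneg hrpos.le _)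
        calc (4/α) ^ (α⁻¹) ≤ (4/αm) ^ (α⁻¹) :=
              Real.rpow_le_rpow (by positivity)
                (div_le_div_of_nonneg_left (by norm_num) hαm hαmα) (by positivity)
        _ ≤ (4/αm) ^ (αm⁻¹) := by
              apply Real.rpow_le_rpow_of_exponent_le
              · rw [le_div_iff₀ hαm]; linarith
              · exact inv_anti₀ hαm hαmα


end LSVaux3b

open Real Set Filter in
theorem stmt12 (αm αp : ℝ) (h1 : 0 < αm) (h2 : αm ≤ αp) (h3 : αp < 1) :
    ∃ C : ℝ, 0 < C ∧
      ∀ Z : ℕ → ℝ → ℝ → ℝ,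
        (∀ a ∈ Set.Ioo (0:ℝ) 1, ∀ x ∈ Set.Ioi (0:ℝ), Z 0 a x = x) →
        (∀ a ∈ Set.Ioo (0:ℝ) 1, ∀ r : ℕ, ∀ x ∈ Set.Ioi (0:ℝ),
          Ea a (Z (r + 1) a x) = Z r a x ∧ 0 < Z (r + 1) a x) →
        (∀ a ∈ Set.Ioo (0:ℝ) 1, ∀ r : ℕ, ∀ x ∈ Set.Ioc (0:ℝ) 1, Z (r + 1) a x ≤ 1/2) →
        ∀ α ∈ Set.Icc αm αp, ∀ z ∈ Set.Ioc (0:ℝ) 1,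
          (∀ r : ℕ, 0 ≤ deriv (fun a => Z r a z) α) ∧
          ∀ r : ℕ, 1 ≤ r →
            deriv (fun a => Z r a z) α / Z r α z ≤
              C * max 1 (Real.log (r * z ^ α)) * (max 1 (Real.log r) - Real.log z) ∧
            deriv (fun a => Z r a z) α ≤
              C * (r : ℝ) ^ (-1 / α) * max 1 (Real.log (r * z ^ α)) *
                (max 1 (Real.log r) - Real.log z) := by
  have hbase : (0:ℝ) < 4/αm := div_pos (by norm_num) h1
  have hC2pos : (0:ℝ) < (4/αm) ^ (αm⁻¹) := Real.rpow_pos_of_pos hbase _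
  have hC2ge1 : (1:ℝ) ≤ (4/αm) ^ (αm⁻¹) := by
    calc (1:ℝ) = 1 ^ (αm⁻¹) := (Real.one_rpow _).symm
    _ ≤ (4/αm) ^ (αm⁻¹) := by
        apply Real.rpow_le_rpow zero_le_one _ (by positivity)
        rw [le_div_iff₀ h1]; linarith
  have hC1pos : (0:ℝ) < (32/αm) * (4/αm+1) := by
    have := div_pos (show (0:ℝ) < 32 by norm_num) h1
    nlinarith [hbase]
  refine ⟨(4/αm) ^ (αm⁻¹) * ((32/αm) * (4/αm+1)), by positivity, ?_⟩
  intro Z hZ0 hZrec hZhalf α hα z hz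
  have hα0 : 0 < α := lt_of_lt_of_le h1 hα.1
  have hα1 : α < 1 := lt_of_le_of_lt hα.2 h3
  have hαIoo : α ∈ Set.Ioo (0:ℝ) 1 := ⟨hα0, hα1⟩
  have hz0 : 0 < z := hz.1
  have hz1 : z ≤ 1 := hz.2
  have hζpos : ∀ k, 0 < Z k α z := by
    intro k
    cases k with
    | zero => rw [hZ0 α hαIoo z hz0]; exact hz0
    | succ k => exact (hZrec α hαIoo k z hz0).2
  have hζeq : ∀ k, Z k α z = Z (k+1) α z + 2 ^ α * (Z (k+1) α z) ^ (1+α) := by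
    intro k
    have h := (hZrec α hαIoo k z hz0).1
    rw [LSVaux.Ea_eq_g (hζpos (k+1))] at h
    rw [← h]
    rfl
  have hζhalf : ∀ k, Z (k+1) α z ≤ 1/2 := fun k => hZhalf α hαIoo k z hz
  -- derivative sequence
  let Df : ℕ → ℝ := fun k => Nat.rec (motive := fun _ => ℝ) 0
    (fun k Dk => (Dk - 2 ^ α * (Z (k+1) α z) ^ (1+α) *
        (Real.log 2 + Real.log (Z (k+1) α z))) /
      (1 + 2 ^ α * ((1+α) * (Z (k+1) α z) ^ α))) k
  have hDf0 : Df 0 = 0 := rfl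
  have hDfrec : ∀ k, Df (k+1) = (Df k - 2 ^ α * (Z (k+1) α z) ^ (1+α) *
      (Real.log 2 + Real.log (Z (k+1) α z))) /
      (1 + 2 ^ α * ((1+α) * (Z (k+1) α z) ^ α)) := fun k => rfl
  have hIoo_mem : Set.Ioo (0:ℝ) 1 ∈ nhds α := isOpen_Ioo.mem_nhds hαIoo
  have hHas : ∀ k, HasDerivAt (fun a => Z k a z) (Df k) α := by
    intro k
    induction k with
    | zero =>
      have hev : (fun a => Z 0 a z) =ᶠ[nhds α] (fun _ => z) := by
        filter_upwards [hIoo_mem] with a ha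
        exact hZ0 a ha z hz0
      rw [hDf0]
      exact (hasDerivAt_const α z).congr_of_eventuallyEq hev
    | succ k ih =>
      have hpos : ∀ᶠ a in nhds α, 0 < Z (k+1) a z := by
        filter_upwards [hIoo_mem] with a ha
        exact (hZrec a ha k z hz0).2
      have heq : ∀ᶠ a in nhds α, LSVaux.g a (Z (k+1) a z) = Z k a z := by
        filter_upwards [hIoo_mem] with a ha
        rw [← LSVaux.Ea_eq_g (hZrec a ha k z hz0).2]
        exact (hZrec a ha k z hz0).1
      have h := LSVaux.implicit_hasDerivAt hα0 (φ := fun a => Z (k+1) a z)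
        (ψ := fun a => Z k a z) hpos heq ih
      rw [hDfrec k]
      exact h
  have hderiv : ∀ k, deriv (fun a => Z k a z) α = Df k := fun k => (hHas k).deriv
  obtain ⟨hDnn, hmain⟩ := LSVaux3b.seq_bounds (ζ := fun k => Z k α z) (D := Df)
    h1 hα.1 hα1 hz0 hz1 (hZ0 α hαIoo z hz0) hζpos hζeq hζhalf hDf0 hDfrec
  constructor
  · intro r
    rw [hderiv r]
    exact hDnn r
  · intro r hr
    obtain ⟨hb1, hb2⟩ := hmain r hr
    have hmax0 : (0:ℝ) ≤ max 1 (Real.log ((r:ℝ) * z ^ α)) :=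
      le_trans zero_le_one (le_max_left _ _)
    have hlogz : Real.log z ≤ 0 := Real.log_nonpos hz0.le hz1
    have hM0 : (0:ℝ) ≤ max 1 (Real.log (r:ℝ)) - Real.log z := by
      have := le_max_left (1:ℝ) (Real.log (r:ℝ))
      linarith
    constructor
    · rw [hderiv r]
      calc Df r / Z r α z ≤ (32/αm) * (4/αm+1) * max 1 (Real.log ((r:ℝ) * z ^ α)) *
            (max 1 (Real.log (r:ℝ)) - Real.log z) := hb1
      _ ≤ (4/αm) ^ (αm⁻¹) * ((32/αm) * (4/αm+1)) * max 1 (Real.log ((r:ℝ) * z ^ α)) *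
            (max 1 (Real.log (r:ℝ)) - Real.log z) := by
            apply mul_le_mul_of_nonneg_right _ hM0
            apply mul_le_mul_of_nonneg_right _ hmax0
            nlinarith [hC1pos, hC2ge1]
    · rw [hderiv r]
      have hsplit : Df r = (Df r / Z r α z) * Z r α z :=
        (div_mul_cancel₀ _ (hζpos r).ne').symm
      rw [hsplit]
      calc (Df r / Z r α z) * Z r α z ≤
          ((32/αm) * (4/αm+1) * max 1 (Real.log ((r:ℝ) * z ^ α)) *
            (max 1 (Real.log (r:ℝ)) - Real.log z)) *
          ((4/αm) ^ (αm⁻¹) * (r:ℝ) ^ (-1/α)) := by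
            apply mul_le_mul hb1 hb2 (hζpos r).le
            positivity
      _ = (4/αm) ^ (αm⁻¹) * ((32/αm) * (4/αm+1)) * (r:ℝ) ^ (-1/α) *
            max 1 (Real.log ((r:ℝ) * z ^ α)) * (max 1 (Real.log (r:ℝ)) - Real.log z) := by
            ring
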